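/- Fix a probability space (Ω, F, P) and an event A ∈ F. For any sub-σ-algebras G, H ⊆ F, setting X = E[1_A | G] and Y = E[1_A | H], one has E|X-Y|² ≤ P(A)(1 - P(A)). -/

import Mathlib

open MeasureTheory ProbabilityTheory

open scoped RealInnerProductSpace ENNReal

/-- Abstract Hilbert-space inequality: if `a` and `b` are "projection-like" images of `u`
(i.e. `u - a ⟂ a` and `u - b ⟂ b`, plus the Cauchy–Schwarz estimate), then
`‖a - b‖² ≤ ‖u‖²`. -/
lemma aux_proj_diff_sq_le {E : Type*} [NormedAddCommGroup E] [InnerProductSpace ℝ E]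
    (u a b : E) (ha : ⟪u - a, a⟫ = 0) (hb : ⟪u - b, b⟫ = 0) :
    ‖a - b‖ ^ 2 ≤ ‖u‖ ^ 2 := by
  have ha' : ⟪u, a⟫ = ‖a‖ ^ 2 := by
    rw [inner_sub_left, real_inner_self_eq_norm_sq] at ha; linarith
  have hb' : ⟪u, b⟫ = ‖b‖ ^ 2 := by
    rw [inner_sub_left, real_inner_self_eq_norm_sq] at hb; linarith
  have hab : ⟪a, b⟫ = ‖b‖ ^ 2 - ⟪u - a, b⟫ := by
    have := inner_sub_left (𝕜 := ℝ) u a b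
    linarith
  have hcs : ⟪u - a, b⟫ ≤ ‖u - a‖ * ‖b‖ := real_inner_le_norm _ _
  have hpyth : ‖u‖ ^ 2 = ‖u - a‖ ^ 2 + ‖a‖ ^ 2 := by
    have h := norm_sub_sq_real u a
    rw [ha'] at h
    linarith
  have hexp : ‖a - b‖ ^ 2 = ‖a‖ ^ 2 - 2 * ⟪a, b⟫ + ‖b‖ ^ 2 := norm_sub_sq_real a b
  nlinarith [sq_nonneg (‖u - a‖ - ‖b‖)]

/-- For a fixed probability space and event `A`, and any sub-σ-algebras `G, H`, the conditional
probabilities `X = E[1_A | G]` and `Y = E[1_A | H]` satisfy `E|X - Y|² ≤ P(A)(1 - P(A))`. -/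
theorem integral_sq_diff_condexp_le {Ω : Type} [m0 : MeasurableSpace Ω] (μ : Measure Ω)
    [IsProbabilityMeasure μ] (A : Set Ω) (hA : MeasurableSet A)
    (G H : MeasurableSpace Ω) (hG : G ≤ m0) (hH : H ≤ m0) :
    ∫ ω, |(μ[A.indicator (fun _ => (1 : ℝ)) | G]) ω -
          (μ[A.indicator (fun _ => (1 : ℝ)) | H]) ω| ^ 2 ∂μ ≤
      (μ A).toReal * (1 - (μ A).toReal) := by
  classical
  letI : MeasurableSpace Ω := m0
  set p : ℝ := (μ A).toReal with hp
  set ind : Ω → ℝ := A.indicator (fun _ => (1 : ℝ)) with hind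
  have hμA : μ A ≠ ∞ := measure_ne_top μ A
  have hint : Integrable ind μ := (integrable_const (1 : ℝ)).indicator hA
  set f : Lp ℝ 2 μ := indicatorConstLp 2 hA hμA (1 : ℝ) with hf
  have hf_ae : ⇑f =ᵐ[μ] ind := indicatorConstLp_coeFn
  -- conditional expectation agrees a.e. with condexpL2
  have key : ∀ (m : MeasurableSpace Ω) (hm : m ≤ m0),
      μ[ind | m] =ᵐ[μ] ((condExpL2 ℝ ℝ hm f : Lp ℝ 2 μ) : Ω → ℝ) := by
    intro m hm
    refine (ae_eq_condExp_of_forall_setIntegral_eq hm hint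
      (fun s _ hμs => integrableOn_condExpL2_of_measure_ne_top hm hμs.ne f)
      (fun s hs hμs => ?_) (aestronglyMeasurable_condExpL2 hm f)).symm
    rw [integral_condExpL2_eq_of_fin_meas_real f hs hμs.ne]
    exact integral_congr_ae (ae_restrict_of_ae hf_ae)
  -- the constant function `p` as an element of L²
  set c : Lp ℝ 2 μ := indicatorConstLp 2 (hG Set.univ MeasurableSet.univ)
    (measure_ne_top μ Set.univ) p with hc
  have hc_ae : ⇑c =ᵐ[μ] fun _ => p := by
    filter_upwards [(indicatorConstLp_coeFn :
      ⇑c =ᵐ[μ] Set.univ.indicator fun _ => p)] with ω hω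
    rw [hω, Set.indicator_univ]
  set u : Lp ℝ 2 μ := f - c with hu
  have hGc : ((condExpL2 ℝ ℝ hG c : Lp ℝ 2 μ) : Lp ℝ 2 μ) = c :=
    condExpL2_indicator_of_measurable hG MeasurableSet.univ (measure_ne_top μ Set.univ) p
  have hHc : ((condExpL2 ℝ ℝ hH c : Lp ℝ 2 μ) : Lp ℝ 2 μ) = c :=
    condExpL2_indicator_of_measurable hH MeasurableSet.univ (measure_ne_top μ Set.univ) p
  set bG : Lp ℝ 2 μ := (condExpL2 ℝ ℝ hG f : Lp ℝ 2 μ) with hbG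
  set bH : Lp ℝ 2 μ := (condExpL2 ℝ ℝ hH f : Lp ℝ 2 μ) with hbH
  set aG : Lp ℝ 2 μ := (condExpL2 ℝ ℝ hG u : Lp ℝ 2 μ) with haG
  set aH : Lp ℝ 2 μ := (condExpL2 ℝ ℝ hH u : Lp ℝ 2 μ) with haH
  have hdiff : bG - bH = aG - aH := by
    have h1 : aG = bG - c := by
      rw [haG, hu, map_sub, Submodule.coe_sub, hGc, hbG]
    have h2 : aH = bH - c := by
      rw [haH, hu, map_sub, Submodule.coe_sub, hHc, hbH]
    rw [h1, h2]; abel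
  -- orthogonality relations
  have hoG : ⟪u - aG, aG⟫ = 0 := by
    have h := inner_condExpL2_eq_inner_fun (𝕜 := ℝ) hG u aG (aestronglyMeasurable_condExpL2 hG u)
    rw [inner_sub_left]
    rw [← haG] at h
    rw [← h]
    ring
  have hoH : ⟪u - aH, aH⟫ = 0 := by
    have h := inner_condExpL2_eq_inner_fun (𝕜 := ℝ) hH u aH (aestronglyMeasurable_condExpL2 hH u)
    rw [inner_sub_left]
    rw [← haH] at h
    rw [← h]
    ring
  -- rewrite the LHS integral as a squared L² norm
  have hLHS : ∫ ω, |(μ[ind | G]) ω - (μ[ind | H]) ω| ^ 2 ∂μ = ‖aG - aH‖ ^ 2 := by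
    rw [← real_inner_self_eq_norm_sq, L2.inner_def]
    refine integral_congr_ae ?_
    filter_upwards [key G hG, key H hH, Lp.coeFn_sub bG bH] with ω h1 h2 h3
    rw [← hdiff]
    have h3' : (bG - bH) ω = bG ω - bH ω := by rw [h3]; rfl
    rw [h1, h2, sq_abs, RCLike.inner_apply, conj_trivial, h3', sq]
  rw [hLHS]
  -- the squared norm of `u` equals `p (1 - p)`
  have hu_ae : ⇑u =ᵐ[μ] fun ω => ind ω - p := by
    filter_upwards [Lp.coeFn_sub f c, hf_ae, hc_ae] with ω h1 h2 h3
    rw [hu, h1, Pi.sub_apply, h2, h3]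
  have hnorm_u : ‖u‖ ^ 2 = p * (1 - p) := by
    rw [← real_inner_self_eq_norm_sq, L2.inner_def]
    have hcongr : ∫ ω, ⟪u ω, u ω⟫ ∂μ = ∫ ω, (ind ω * (1 - 2 * p) + p ^ 2) ∂μ := by
      refine integral_congr_ae ?_
      filter_upwards [hu_ae] with ω hω
      rw [RCLike.inner_apply, conj_trivial, hω]
      by_cases h : ω ∈ A
      · simp [hind, Set.indicator_of_mem, h]; ring
      · simp [hind, Set.indicator_of_notMem, h]; ring
    rw [hcongr, integral_add (hint.mul_const _) (integrable_const _),
      integral_mul_const, integral_const]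
    have hip : ∫ ω, ind ω ∂μ = p := by
      rw [hind, integral_indicator_const (1 : ℝ) hA]
      simp [hp, measureReal_def]
    rw [hip]
    simp only [measure_univ, ENNReal.toReal_one, smul_eq_mul, one_mul, probReal_univ, mul_one]
    ring
  calc ‖aG - aH‖ ^ 2 ≤ ‖u‖ ^ 2 := aux_proj_diff_sq_le u aG aH hoG hoH
    _ = p * (1 - p) := hnorm_u
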